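/- Let G be a non-discrete Polish group. Then cov_G = cov*_G, where cov_G is the least cardinality of a set Q ⊆ G such that Q·C = G for some closed nowhere dense C ⊆ G, and cov*_G is the least cardinality of a set Q ⊆ G such that Q·M = G for some meagre M ⊆ G. -/

import Mathlib

open Set Topology Cardinal Pointwise

/-- `cov_G`: the least cardinality of a set `Q ⊆ G` such that `Q·C = G` for some closed
nowhere dense `C ⊆ G`. -/
noncomputable def covGroup (G : Type*) [Group G] [TopologicalSpace G] : Cardinal :=
  sInf {κ | ∃ Q C : Set G, κ = #Q ∧ IsClosed C ∧ IsNowhereDense C ∧ Q * C = Set.univ}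

/-- `cov*_G`: the least cardinality of a set `Q ⊆ G` such that `Q·M = G` for some
meagre `M ⊆ G`. -/
noncomputable def covGroupStar (G : Type*) [Group G] [TopologicalSpace G] : Cardinal :=
  sInf {κ | ∃ Q M : Set G, κ = #Q ∧ IsMeagre M ∧ Q * M = Set.univ}

namespace CovAuxProof

/-! ### Basic lemmas about nowhere dense sets -/

lemma nwdMono {X : Type*} [TopologicalSpace X] {s t : Set X} (hst : s ⊆ t)
    (ht : IsNowhereDense t) : IsNowhereDense s := by
  rw [IsNowhereDense] at ht ⊢
  have h := interior_mono (closure_mono hst)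
  rw [ht] at h
  exact Set.subset_empty_iff.mp h

lemma nwdUnion {X : Type*} [TopologicalSpace X] {s t : Set X} (hs : IsNowhereDense s)
    (ht : IsNowhereDense t) : IsNowhereDense (s ∪ t) := by
  rw [IsNowhereDense, closure_union]
  set U := interior (closure s ∪ closure t) with hU
  have hUo : IsOpen U := isOpen_interior
  have h1 : U \ closure s ⊆ interior (closure t) := by
    apply interior_maximal _ (hUo.sdiff isClosed_closure)
    intro x hx
    rcases interior_subset hx.1 with h | h
    · exact absurd h hx.2
    · exact h
  rw [ht] at h1
  have h2 : U ⊆ closure s := by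
    intro x hx
    by_contra hxc
    exact absurd (h1 ⟨hx, hxc⟩) (Set.notMem_empty x)
  have h3 : U ⊆ interior (closure s) := interior_maximal h2 hUo
  rw [hs] at h3
  exact Set.subset_empty_iff.mp h3

lemma nwdBiUnionFinset {X : Type*} [TopologicalSpace X] {β : Type*} {f : β → Set X}
    (s : Finset β) :
    (∀ i ∈ s, IsNowhereDense (f i)) → IsNowhereDense (⋃ i ∈ s, f i) := by
  classical
  induction s using Finset.induction_on with
  | empty => intro _; simp
  | insert _ _ ha ih =>
    intro h
    rw [Finset.set_biUnion_insert]
    exact nwdUnion (h _ (Finset.mem_insert_self _ _))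
      (ih fun i hi => h i (Finset.mem_insert_of_mem hi))

lemma nwdSmul {G : Type*} [Group G] [TopologicalSpace G] [IsTopologicalGroup G]
    {s : Set G} (hs : IsNowhereDense s) (a : G) : IsNowhereDense (a • s) := by
  rw [IsNowhereDense, closure_smul, interior_smul, hs, Set.smul_set_empty]

lemma nonemptyDiffNwd {X : Type*} [TopologicalSpace X] {o P : Set X} (ho : IsOpen o)
    (hne : o.Nonempty) (hP : IsNowhereDense P) : (o \ P).Nonempty := by
  rw [Set.diff_nonempty]
  intro hsub
  have h := interior_maximal (hsub.trans subset_closure) ho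
  rw [hP] at h
  exact Set.not_nonempty_empty (hne.mono h)

lemma nwdIsMeagre {X : Type*} [TopologicalSpace X] {s : Set X} (hs : IsNowhereDense s) :
    IsMeagre s := by
  rw [isMeagre_iff_countable_union_isNowhereDense]
  exact ⟨{s}, by simpa using hs, Set.countable_singleton s, by simp⟩

lemma isMeagreIUnion {X : Type*} [TopologicalSpace X] {ι : Type*} [Countable ι] {f : ι → Set X}
    (h : ∀ i, IsMeagre (f i)) : IsMeagre (⋃ i, f i) := by
  rcases isEmpty_or_nonempty ι with hι | hι
  · simpa [Set.iUnion_of_empty] using IsMeagre.empty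
  · obtain ⟨g, hg⟩ := exists_surjective_nat ι
    rw [← hg.iUnion_comp (g := f)]
    exact isMeagre_iUnion fun n => h (g n)

/-! ### Generic recursion machinery -/

variable {σ : Type*}

def histF (step : ℕ → (ℕ → σ) → σ) (d₀ : σ) : ℕ → ℕ → σ
  | 0 => fun _ => d₀
  | t + 1 => fun s => if s = t then step t (histF step d₀ t) else histF step d₀ t s

def seqFn (step : ℕ → (ℕ → σ) → σ) (d₀ : σ) (t : ℕ) : σ := step t (histF step d₀ t)

lemma histF_lt (step : ℕ → (ℕ → σ) → σ) (d₀ : σ) :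
    ∀ {t s : ℕ}, s < t → histF step d₀ t s = seqFn step d₀ s := by
  intro t
  induction t with
  | zero => intro s h; omega
  | succ t ih =>
    intro s h
    rcases Nat.lt_succ_iff_lt_or_eq.mp h with h' | rfl
    · have hne : s ≠ t := Nat.ne_of_lt h'
      simp only [histF, if_neg hne]
      exact ih h'
    · simp only [histF, if_pos rfl]
      rfl




set_option linter.unusedSectionVars false

open Set Pointwise

variable {G : Type*} [Group G] [TopologicalSpace G] [IsTopologicalGroup G]

/-! ### Case B : `G` is not totally bounded at some scale `V₀` -/

structure BData (G : Type*) [Group G] [TopologicalSpace G] where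
  V₀ : Set G
  W : Set G
  W₂ : Set G
  d : ℕ → G
  F : ℕ → Set G
  Bb : ℕ → Set G

def pieceB (D : BData G) (t : ℕ) : Set G :=
  D.F t.unpair.1 ∩ closure (D.d t.unpair.2 • D.W₂)

def gmulB (D : BData G) (z : G) (t : ℕ) : G := z * (D.d t.unpair.2)⁻¹

def gpB (D : BData G) (z : G) (t : ℕ) : Set G := gmulB D z t • pieceB D t

noncomputable def uChoice (B P : Set G) : G := Classical.epsilon fun x => x ∈ B \ P

noncomputable def zChoice (A : Set G) : G := Classical.epsilon fun z => z ∉ A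

noncomputable def stepB (D : BData G) (t : ℕ) (prev : ℕ → G × G) : G × G :=
  (uChoice (D.Bb t) (⋃ s ∈ Finset.range t, gpB D (prev s).2 s),
   zChoice ((⋃ s ∈ Finset.range t, (prev s).1 • D.V₀) ∪
     (uChoice (D.Bb t) (⋃ s ∈ Finset.range t, gpB D (prev s).2 s)) • D.V₀))

noncomputable def uB (D : BData G) (t : ℕ) : G := (seqFn (stepB D) (1, 1) t).1

noncomputable def zB (D : BData G) (t : ℕ) : G := (seqFn (stepB D) (1, 1) t).2

noncomputable def PB (D : BData G) (t : ℕ) : Set G :=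
  ⋃ s ∈ Finset.range t, gpB D (zB D s) s

noncomputable def AB (D : BData G) (t : ℕ) : Set G :=
  ⋃ s ∈ Finset.range t, uB D s • D.V₀

lemma PB_eq (D : BData G) (t : ℕ) :
    (⋃ s ∈ Finset.range t, gpB D ((histF (stepB D) (1, 1) t s).2) s) = PB D t := by
  refine Set.iUnion₂_congr fun s hs => ?_
  rw [histF_lt _ _ (Finset.mem_range.mp hs)]
  rfl

lemma AB_eq (D : BData G) (t : ℕ) :
    (⋃ s ∈ Finset.range t, (histF (stepB D) (1, 1) t s).1 • D.V₀) = AB D t := by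
  refine Set.iUnion₂_congr fun s hs => ?_
  rw [histF_lt _ _ (Finset.mem_range.mp hs)]
  rfl

lemma uB_eq (D : BData G) (t : ℕ) : uB D t = uChoice (D.Bb t) (PB D t) := by
  have h : uB D t
      = uChoice (D.Bb t) (⋃ s ∈ Finset.range t, gpB D ((histF (stepB D) (1, 1) t s).2) s) := rfl
  rw [h, PB_eq]

lemma zB_eq (D : BData G) (t : ℕ) : zB D t = zChoice (AB D t ∪ uB D t • D.V₀) := by
  have h : zB D t
      = zChoice ((⋃ s ∈ Finset.range t, (histF (stepB D) (1, 1) t s).1 • D.V₀) ∪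
        (uChoice (D.Bb t)
          (⋃ s ∈ Finset.range t, gpB D ((histF (stepB D) (1, 1) t s).2) s)) • D.V₀) := rfl
  rw [h, AB_eq, PB_eq, ← uB_eq]

structure BHyp (D : BData G) : Prop where
  hV₀o : IsOpen D.V₀
  hb : ∀ S : Finset G, ¬ (Set.univ : Set G) ⊆ ⋃ x ∈ S, x • D.V₀
  hWo : IsOpen D.W
  hW1 : (1 : G) ∈ D.W
  hWV : ∀ w₁ ∈ D.W, ∀ w₂ ∈ D.W, w₁ * w₂⁻¹ ∈ D.V₀
  hW₂o : IsOpen D.W₂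
  hW₂1 : (1 : G) ∈ D.W₂
  hW₂W : closure D.W₂ ⊆ D.W
  hd : DenseRange D.d
  hBo : ∀ t, IsOpen (D.Bb t)
  hBne : ∀ t, (D.Bb t).Nonempty
  hBd : ∀ O : Set G, IsOpen O → O.Nonempty → ∃ t, D.Bb t ⊆ O
  hFc : ∀ n, IsClosed (D.F n)
  hFn : ∀ n, IsNowhereDense (D.F n)

variable {D : BData G}

lemma pieceB_closed (H : BHyp D) (t : ℕ) : IsClosed (pieceB D t) :=
  (H.hFc _).inter isClosed_closure

lemma gpB_closed (H : BHyp D) (z : G) (t : ℕ) : IsClosed (gpB D z t) :=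
  (pieceB_closed H t).smul _

lemma gpB_nwd (H : BHyp D) (z : G) (t : ℕ) : IsNowhereDense (gpB D z t) :=
  nwdSmul (nwdMono Set.inter_subset_left (H.hFn _)) _

lemma PB_closed (H : BHyp D) (t : ℕ) : IsClosed (PB D t) :=
  isClosed_biUnion_finset fun s _ => gpB_closed H _ s

lemma PB_nwd (H : BHyp D) (t : ℕ) : IsNowhereDense (PB D t) :=
  nwdBiUnionFinset _ fun s _ => gpB_nwd H _ s

lemma uB_spec (H : BHyp D) (t : ℕ) : uB D t ∈ D.Bb t \ PB D t := by
  rw [uB_eq]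
  unfold uChoice
  exact Classical.epsilon_spec (nonemptyDiffNwd (H.hBo t) (H.hBne t) (PB_nwd H t))

lemma zB_spec (H : BHyp D) (t : ℕ) : zB D t ∉ AB D t ∪ uB D t • D.V₀ := by
  rw [zB_eq]
  unfold zChoice
  refine Classical.epsilon_spec (p := fun z => z ∉ AB D t ∪ uB D t • D.V₀) ?_
  classical
  by_contra hc
  rw [not_exists] at hc
  refine H.hb (insert (uB D t) ((Finset.range t).image (uB D))) ?_
  intro z _
  rcases not_not.mp (hc z) with hz | hz
  · obtain ⟨s, hs, hzs⟩ := Set.mem_iUnion₂.mp hz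
    exact Set.mem_iUnion₂.mpr
      ⟨uB D s, Finset.mem_insert_of_mem (Finset.mem_image_of_mem _ hs), hzs⟩
  · exact Set.mem_iUnion₂.mpr ⟨uB D t, Finset.mem_insert_self _ _, hz⟩

noncomputable def holeB (D : BData G) (t : ℕ) : Set G :=
  (D.Bb t \ PB D t) ∩ uB D t • D.W

lemma holeB_open (H : BHyp D) (t : ℕ) : IsOpen (holeB D t) :=
  ((H.hBo t).sdiff (PB_closed H t)).inter (H.hWo.smul _)

lemma uB_mem_holeB (H : BHyp D) (t : ℕ) : uB D t ∈ holeB D t :=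
  ⟨uB_spec H t, ⟨1, H.hW1, by simp⟩⟩

lemma holeB_sub_Bb (t : ℕ) : holeB D t ⊆ D.Bb t := fun _ hx => hx.1.1

noncomputable def CB (D : BData G) : Set G := (⋃ t, holeB D t)ᶜ

lemma CB_closed (H : BHyp D) : IsClosed (CB D) :=
  isClosed_compl_iff.mpr (isOpen_iUnion fun t => holeB_open H t)

lemma CB_nwd (H : BHyp D) : IsNowhereDense (CB D) := by
  have hdense : Dense (⋃ t, holeB D t) := by
    rw [dense_iff_inter_open]
    intro U hU hUne
    obtain ⟨t, ht⟩ := H.hBd U hU hUne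
    exact ⟨uB D t, ht (holeB_sub_Bb t (uB_mem_holeB H t)),
      Set.mem_iUnion.mpr ⟨t, uB_mem_holeB H t⟩⟩
  rw [(CB_closed H).isNowhereDense_iff, CB, interior_compl, hdense.closure_eq, Set.compl_univ]

lemma gpB_disj (H : BHyp D) (s t : ℕ) : gpB D (zB D s) s ∩ holeB D t = ∅ := by
  rw [Set.eq_empty_iff_forall_notMem]
  rintro x ⟨hxg, hxh⟩
  rcases lt_or_ge s t with hst | hts
  · exact hxh.1.2 (Set.mem_iUnion₂.mpr ⟨s, Finset.mem_range.mpr hst, hxg⟩)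
  · obtain ⟨y, hy, hxy⟩ := hxg
    have hxy' : zB D s * (D.d s.unpair.2)⁻¹ * y = x := hxy
    have hy2 : y ∈ D.d s.unpair.2 • closure D.W₂ := by
      rw [← closure_smul]; exact hy.2
    obtain ⟨w, hw, hyw⟩ := hy2
    have hyw' : D.d s.unpair.2 * w = y := hyw
    have hxw : x = zB D s * w := by
      rw [← hxy', ← hyw', mul_assoc, inv_mul_cancel_left]
    obtain ⟨w₂, hw₂, hxw₂⟩ := hxh.2
    have hxw₂' : uB D t * w₂ = x := hxw₂
    have h1 : uB D t * w₂ = zB D s * w := by rw [hxw₂', hxw]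
    have hz : zB D s ∈ uB D t • D.V₀ := by
      refine ⟨w₂ * w⁻¹, H.hWV w₂ hw₂ w (H.hW₂W hw), ?_⟩
      show uB D t * (w₂ * w⁻¹) = zB D s
      rw [← mul_assoc, h1, mul_assoc, mul_inv_cancel, mul_one]
    rcases eq_or_lt_of_le hts with heq | h
    · subst heq
      exact zB_spec H t (Or.inr hz)
    · exact zB_spec H s (Or.inl (Set.mem_iUnion₂.mpr ⟨t, Finset.mem_range.mpr h, hz⟩))

lemma gpB_sub_CB (H : BHyp D) (s : ℕ) : gpB D (zB D s) s ⊆ CB D := by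
  intro x hx
  simp only [CB, Set.mem_compl_iff, Set.mem_iUnion, not_exists]
  intro t ht
  have h := gpB_disj H s t
  rw [Set.eq_empty_iff_forall_notMem] at h
  exact h x ⟨hx, ht⟩

lemma coverB (H : BHyp D) (n : ℕ) :
    D.F n ⊆ ⋃ k, (zB D (Nat.pair n k) * (D.d k)⁻¹)⁻¹ • CB D := by
  intro x hx
  have hU : IsOpen (x • D.W₂⁻¹) := (H.hW₂o.inv).smul x
  have hUne : (x • D.W₂⁻¹).Nonempty := ⟨x, 1, by simpa using H.hW₂1, by simp⟩
  obtain ⟨k, hk⟩ := H.hd.exists_mem_open hU hUne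
  obtain ⟨v, hv, hxv⟩ := hk
  have hxv' : x * v = D.d k := hxv
  have hxmem : x ∈ D.d k • D.W₂ := by
    refine ⟨v⁻¹, Set.mem_inv.mp hv, ?_⟩
    show D.d k * v⁻¹ = x
    rw [← hxv', mul_assoc, mul_inv_cancel, mul_one]
  have hpiece : x ∈ pieceB D (Nat.pair n k) := by
    simp only [pieceB, Nat.unpair_pair]
    exact ⟨hx, subset_closure hxmem⟩
  have hgp : gpB D (zB D (Nat.pair n k)) (Nat.pair n k)
      = (zB D (Nat.pair n k) * (D.d k)⁻¹) • pieceB D (Nat.pair n k) := by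
    simp only [gpB, gmulB, Nat.unpair_pair]
  have hgmem : (zB D (Nat.pair n k) * (D.d k)⁻¹) • x ∈ CB D := by
    apply gpB_sub_CB H (Nat.pair n k)
    rw [hgp]
    exact Set.smul_mem_smul_set hpiece
  exact Set.mem_iUnion.mpr ⟨k, ⟨(zB D (Nat.pair n k) * (D.d k)⁻¹) • x, hgmem, inv_smul_smul _ x⟩⟩

lemma keyB (H : BHyp D) :
    ∃ C : Set G, IsClosed C ∧ IsNowhereDense C ∧
      ∃ E : ℕ → Set G, (∀ n, (E n).Countable) ∧ ∀ n, D.F n ⊆ E n * C := by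
  refine ⟨CB D, CB_closed H, CB_nwd H,
    fun n => Set.range fun k => (zB D (Nat.pair n k) * (D.d k)⁻¹)⁻¹,
    fun n => Set.countable_range _, fun n x hx => ?_⟩
  obtain ⟨k, hk⟩ := Set.mem_iUnion.mp (coverB H n hx)
  obtain ⟨c, hc, hcx⟩ := hk
  have hcx' : (zB D (Nat.pair n k) * (D.d k)⁻¹)⁻¹ * c = x := hcx
  rw [← hcx']
  exact Set.mul_mem_mul (Set.mem_range_self k) hc




set_option linter.unusedSectionVars false

open Set Pointwise

variable {G : Type*} [Group G] [TopologicalSpace G] [IsTopologicalGroup G]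

/-! ### Case A : `G` is totally bounded at every scale -/

structure AData (G : Type*) [Group G] [TopologicalSpace G] where
  F : ℕ → Set G
  Bb : ℕ → Set G

noncomputable def holeChoice (B P : Set G) : Set G :=
  Classical.epsilon fun N => IsOpen N ∧ N ⊆ B \ P ∧ N.Nonempty ∧ (1 : G) ∉ closure N

noncomputable def vChoice (Hs : Set G) : Set G :=
  Classical.epsilon fun V => IsOpen V ∧ (1 : G) ∈ V ∧ Disjoint (closure V) Hs

noncomputable def sChoice (V : Set G) : Finset G :=
  Classical.epsilon fun S : Finset G => (Set.univ : Set G) ⊆ ⋃ x ∈ S, x • V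

def piecesOf (F : ℕ → Set G) (q : ℕ → Set G × Set G × Finset G) (t : ℕ) : Set G :=
  ⋃ s ∈ Finset.range t, ⋃ x ∈ (q s).2.2, x⁻¹ • (F s ∩ x • closure (q s).2.1)

noncomputable def stepA (D : AData G) (t : ℕ) (prev : ℕ → Set G × Set G × Finset G) :
    Set G × Set G × Finset G :=
  (holeChoice (D.Bb t) (piecesOf D.F prev t),
   vChoice ((⋃ s ∈ Finset.range t, closure (prev s).1) ∪
      closure (holeChoice (D.Bb t) (piecesOf D.F prev t))),
   sChoice (vChoice ((⋃ s ∈ Finset.range t, closure (prev s).1) ∪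
      closure (holeChoice (D.Bb t) (piecesOf D.F prev t)))))

noncomputable def seqA (D : AData G) (t : ℕ) : Set G × Set G × Finset G :=
  seqFn (stepA D) (∅, ∅, ∅) t

noncomputable def holeA (D : AData G) (t : ℕ) : Set G := (seqA D t).1
noncomputable def VA (D : AData G) (t : ℕ) : Set G := (seqA D t).2.1
noncomputable def SA (D : AData G) (t : ℕ) : Finset G := (seqA D t).2.2

noncomputable def PA (D : AData G) (t : ℕ) : Set G := piecesOf D.F (seqA D) t

noncomputable def HclA (D : AData G) (t : ℕ) : Set G :=
  (⋃ s ∈ Finset.range t, closure (holeA D s)) ∪ closure (holeA D t)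

lemma PA_eq (D : AData G) (t : ℕ) :
    piecesOf D.F (histF (stepA D) (∅, ∅, ∅) t) t = PA D t := by
  refine Set.iUnion₂_congr fun s hs => ?_
  rw [histF_lt _ _ (Finset.mem_range.mp hs)]
  rfl

lemma HclA_aux_eq (D : AData G) (t : ℕ) :
    (⋃ s ∈ Finset.range t, closure ((histF (stepA D) (∅, ∅, ∅) t s).1))
      = ⋃ s ∈ Finset.range t, closure (holeA D s) := by
  refine Set.iUnion₂_congr fun s hs => ?_
  rw [histF_lt _ _ (Finset.mem_range.mp hs)]
  rfl

lemma holeA_eq (D : AData G) (t : ℕ) : holeA D t = holeChoice (D.Bb t) (PA D t) := by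
  have h : holeA D t = holeChoice (D.Bb t) (piecesOf D.F (histF (stepA D) (∅, ∅, ∅) t) t) := rfl
  rw [h, PA_eq]

lemma VA_eq (D : AData G) (t : ℕ) : VA D t = vChoice (HclA D t) := by
  have h : VA D t = vChoice ((⋃ s ∈ Finset.range t, closure ((histF (stepA D) (∅, ∅, ∅) t s).1))
      ∪ closure (holeChoice (D.Bb t) (piecesOf D.F (histF (stepA D) (∅, ∅, ∅) t) t))) := rfl
  rw [h, HclA_aux_eq, PA_eq, ← holeA_eq]
  rfl

lemma SA_eq (D : AData G) (t : ℕ) : SA D t = sChoice (VA D t) := by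
  have h : SA D t = sChoice (vChoice
      ((⋃ s ∈ Finset.range t, closure ((histF (stepA D) (∅, ∅, ∅) t s).1))
      ∪ closure (holeChoice (D.Bb t) (piecesOf D.F (histF (stepA D) (∅, ∅, ∅) t) t)))) := rfl
  rw [h, HclA_aux_eq, PA_eq, ← holeA_eq]
  show sChoice (vChoice (HclA D t)) = sChoice (VA D t)
  rw [← VA_eq]

structure AHyp (D : AData G) : Prop where
  ha : ∀ V : Set G, IsOpen V → (1 : G) ∈ V → ∃ S : Finset G, (Set.univ : Set G) ⊆ ⋃ x ∈ S, x • V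
  hBo : ∀ t, IsOpen (D.Bb t)
  hBne : ∀ t, (D.Bb t).Nonempty
  hBd : ∀ O : Set G, IsOpen O → O.Nonempty → ∃ t, D.Bb t ⊆ O
  hFc : ∀ n, IsClosed (D.F n)
  hFn : ∀ n, IsNowhereDense (D.F n)

/-! Existence lemmas (using Polish structure and non-discreteness). -/

lemma existsHole [PolishSpace G] (hnd : ¬DiscreteTopology G) {B P : Set G} (hBo : IsOpen B)
    (hBne : B.Nonempty) (hPn : IsNowhereDense P) :
    ∃ N : Set G, IsOpen N ∧ N ⊆ B \ P ∧ N.Nonempty ∧ (1 : G) ∉ closure N := by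
  letI := TopologicalSpace.upgradeIsCompletelyMetrizable G
  have hOo : IsOpen (B \ closure P) := hBo.sdiff isClosed_closure
  have hOne : (B \ closure P).Nonempty := nonemptyDiffNwd hBo hBne hPn.closure
  have hne1 : ¬(B \ closure P ⊆ {1}) := by
    intro hsub
    obtain ⟨x, hx⟩ := hOne
    have hx1 : x = 1 := hsub hx
    have hOeq : B \ closure P = {1} := by
      refine Set.Subset.antisymm hsub ?_
      intro y hy
      rw [Set.mem_singleton_iff] at hy
      subst hy
      exact hx1 ▸ hx
    exact hnd (discreteTopology_iff_isOpen_singleton_one.mpr (hOeq ▸ hOo))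
  obtain ⟨v, hv, hv1⟩ := Set.not_subset.mp hne1
  have hopen : IsOpen ((B \ closure P) ∩ {(1 : G)}ᶜ) := hOo.inter isOpen_compl_singleton
  have hvmem : v ∈ (B \ closure P) ∩ {(1 : G)}ᶜ := ⟨hv, hv1⟩
  obtain ⟨tset, htm, htc, hts⟩ := exists_mem_nhds_isClosed_subset (hopen.mem_nhds hvmem)
  refine ⟨interior tset, isOpen_interior, ?_, ⟨v, mem_interior_iff_mem_nhds.mpr htm⟩, ?_⟩
  · intro y hy
    have h := hts (interior_subset hy)
    exact ⟨h.1.1, fun hP => h.1.2 (subset_closure hP)⟩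
  · intro h1
    have h2 : (1 : G) ∈ tset := htc.closure_subset ((closure_mono interior_subset) h1)
    exact (hts h2).2 rfl

lemma existsV [PolishSpace G] {Hs : Set G} (hc : IsClosed Hs) (h1 : (1 : G) ∉ Hs) :
    ∃ V : Set G, IsOpen V ∧ (1 : G) ∈ V ∧ Disjoint (closure V) Hs := by
  letI := TopologicalSpace.upgradeIsCompletelyMetrizable G
  have hmem : Hsᶜ ∈ 𝓝 (1 : G) := hc.isOpen_compl.mem_nhds h1
  obtain ⟨tset, htm, htc, hts⟩ := exists_mem_nhds_isClosed_subset hmem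
  refine ⟨interior tset, isOpen_interior, mem_interior_iff_mem_nhds.mpr htm, ?_⟩
  refine Set.disjoint_left.mpr fun y hy hyH => ?_
  have h2 : y ∈ tset := htc.closure_subset ((closure_mono interior_subset) hy)
  exact hts h2 hyH

variable {D : AData G}

noncomputable def pieceA (D : AData G) (s : ℕ) (x : G) : Set G :=
  x⁻¹ • (D.F s ∩ x • closure (VA D s))

lemma PA_eq' (D : AData G) (t : ℕ) :
    PA D t = ⋃ s ∈ Finset.range t, ⋃ x ∈ SA D s, pieceA D s x := rfl

lemma PA_closed (H : AHyp D) (t : ℕ) : IsClosed (PA D t) := by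
  rw [PA_eq']
  exact isClosed_biUnion_finset fun s _ => isClosed_biUnion_finset fun x _ =>
    ((H.hFc s).inter (isClosed_closure.smul x)).smul x⁻¹

lemma PA_nwd (H : AHyp D) (t : ℕ) : IsNowhereDense (PA D t) := by
  rw [PA_eq']
  exact nwdBiUnionFinset _ fun s _ => nwdBiUnionFinset _ fun x _ =>
    nwdSmul (nwdMono Set.inter_subset_left (H.hFn s)) _

lemma holeA_spec [PolishSpace G] (hnd : ¬DiscreteTopology G) (H : AHyp D) (t : ℕ) :
    IsOpen (holeA D t) ∧ holeA D t ⊆ D.Bb t \ PA D t ∧ (holeA D t).Nonempty ∧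
      (1 : G) ∉ closure (holeA D t) := by
  rw [holeA_eq]
  unfold holeChoice
  exact Classical.epsilon_spec (existsHole hnd (H.hBo t) (H.hBne t) (PA_nwd H t))

lemma HclA_closed (D : AData G) (t : ℕ) : IsClosed (HclA D t) :=
  (isClosed_biUnion_finset fun s _ => isClosed_closure).union isClosed_closure

lemma HclA_not1 [PolishSpace G] (hnd : ¬DiscreteTopology G) (H : AHyp D) (t : ℕ) :
    (1 : G) ∉ HclA D t := by
  rintro (h | h)
  · obtain ⟨s, _, h⟩ := Set.mem_iUnion₂.mp h
    exact (holeA_spec hnd H s).2.2.2 h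
  · exact (holeA_spec hnd H t).2.2.2 h

lemma VA_spec [PolishSpace G] (hnd : ¬DiscreteTopology G) (H : AHyp D) (t : ℕ) :
    IsOpen (VA D t) ∧ (1 : G) ∈ VA D t ∧ Disjoint (closure (VA D t)) (HclA D t) := by
  rw [VA_eq]
  unfold vChoice
  exact Classical.epsilon_spec (existsV (HclA_closed D t) (HclA_not1 hnd H t))

lemma SA_spec [PolishSpace G] (hnd : ¬DiscreteTopology G) (H : AHyp D) (t : ℕ) :
    (Set.univ : Set G) ⊆ ⋃ x ∈ SA D t, x • VA D t := by
  rw [SA_eq]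
  unfold sChoice
  exact Classical.epsilon_spec (H.ha _ (VA_spec hnd H t).1 (VA_spec hnd H t).2.1)

noncomputable def CA (D : AData G) : Set G := (⋃ t, holeA D t)ᶜ

lemma CA_closed [PolishSpace G] (hnd : ¬DiscreteTopology G) (H : AHyp D) : IsClosed (CA D) :=
  isClosed_compl_iff.mpr (isOpen_iUnion fun t => (holeA_spec hnd H t).1)

lemma CA_nwd [PolishSpace G] (hnd : ¬DiscreteTopology G) (H : AHyp D) :
    IsNowhereDense (CA D) := by
  have hdense : Dense (⋃ t, holeA D t) := by
    rw [dense_iff_inter_open]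
    intro U hU hUne
    obtain ⟨t, ht⟩ := H.hBd U hU hUne
    obtain ⟨y, hy⟩ := (holeA_spec hnd H t).2.2.1
    exact ⟨y, ht ((holeA_spec hnd H t).2.1 hy).1, Set.mem_iUnion.mpr ⟨t, hy⟩⟩
  rw [(CA_closed hnd H).isNowhereDense_iff, CA, interior_compl, hdense.closure_eq,
    Set.compl_univ]

lemma pieceA_disj [PolishSpace G] (hnd : ¬DiscreteTopology G) (H : AHyp D) (s t : ℕ) (x : G)
    (hx : x ∈ SA D s) : pieceA D s x ∩ holeA D t = ∅ := by
  rw [Set.eq_empty_iff_forall_notMem]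
  rintro y ⟨hyp, hyh⟩
  rcases lt_or_ge s t with hst | hts
  · have hmem : y ∈ PA D t := by
      rw [PA_eq']
      exact Set.mem_iUnion₂.mpr ⟨s, Finset.mem_range.mpr hst,
        Set.mem_iUnion₂.mpr ⟨x, hx, hyp⟩⟩
    exact ((holeA_spec hnd H t).2.1 hyh).2 hmem
  · have hyV : y ∈ closure (VA D s) := by
      obtain ⟨w, hw, hwy⟩ := hyp
      obtain ⟨v, hv, hvw⟩ := hw.2
      have hwy' : x⁻¹ * w = y := hwy
      have hvw' : x * v = w := hvw
      rw [← hwy', ← hvw', inv_mul_cancel_left]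
      exact hv
    have hyH : y ∈ HclA D s := by
      rcases eq_or_lt_of_le hts with heq | h
      · subst heq
        exact Or.inr (subset_closure hyh)
      · exact Or.inl (Set.mem_iUnion₂.mpr ⟨t, Finset.mem_range.mpr h, subset_closure hyh⟩)
    exact Set.disjoint_left.mp (VA_spec hnd H s).2.2 hyV hyH

lemma pieceA_sub_CA [PolishSpace G] (hnd : ¬DiscreteTopology G) (H : AHyp D) (s : ℕ) (x : G)
    (hx : x ∈ SA D s) : pieceA D s x ⊆ CA D := by
  intro y hy
  simp only [CA, Set.mem_compl_iff, Set.mem_iUnion, not_exists]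
  intro t ht
  have h := pieceA_disj hnd H s t x hx
  rw [Set.eq_empty_iff_forall_notMem] at h
  exact h y ⟨hy, ht⟩

lemma keyA [PolishSpace G] (hnd : ¬DiscreteTopology G) (H : AHyp D) :
    ∃ C : Set G, IsClosed C ∧ IsNowhereDense C ∧
      ∃ E : ℕ → Set G, (∀ n, (E n).Countable) ∧ ∀ n, D.F n ⊆ E n * C := by
  refine ⟨CA D, CA_closed hnd H, CA_nwd hnd H, fun n => (SA D n : Set G),
    fun n => (SA D n).finite_toSet.countable, fun n y hy => ?_⟩
  obtain ⟨a, ha, hya⟩ := Set.mem_iUnion₂.mp (SA_spec hnd H n (Set.mem_univ y))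
  have hmem : a⁻¹ • y ∈ pieceA D n a :=
    ⟨y, ⟨hy, Set.smul_set_mono subset_closure hya⟩, rfl⟩
  have hC : a⁻¹ • y ∈ CA D := pieceA_sub_CA hnd H n a ha hmem
  have hya' : a * (a⁻¹ • y) = y := by
    show a * (a⁻¹ * y) = y
    rw [mul_inv_cancel_left]
  rw [← hya']
  exact Set.mul_mem_mul (Finset.mem_coe.mpr ha) hC




set_option linter.unusedSectionVars false

open Set Pointwise Topology

variable {G : Type*} [Group G] [TopologicalSpace G] [IsTopologicalGroup G]

/-- Key lemma: every countable family of closed nowhere dense sets can be covered,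
after countably many left translations, by a single closed nowhere dense set. -/
lemma keyLemma [PolishSpace G] (hnd : ¬DiscreteTopology G) (F : ℕ → Set G)
    (hFc : ∀ n, IsClosed (F n)) (hFn : ∀ n, IsNowhereDense (F n)) :
    ∃ C : Set G, IsClosed C ∧ IsNowhereDense C ∧
      ∃ E : ℕ → Set G, (∀ n, (E n).Countable) ∧ ∀ n, F n ⊆ E n * C := by
  letI := TopologicalSpace.upgradeIsCompletelyMetrizable G
  obtain ⟨b, hbc, hbne, hbb⟩ := TopologicalSpace.exists_countable_basis G
  have hbnonempty : b.Nonempty := by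
    obtain ⟨v, hv, -, -⟩ := hbb.exists_subset_of_mem_open (Set.mem_univ (1 : G)) isOpen_univ
    exact ⟨v, hv⟩
  obtain ⟨Bb, hBb⟩ := hbc.exists_eq_range hbnonempty
  have hBo : ∀ t, IsOpen (Bb t) := fun t =>
    hbb.isOpen (by rw [hBb]; exact Set.mem_range_self t)
  have hBne : ∀ t, (Bb t).Nonempty := fun t => Set.nonempty_iff_ne_empty.mpr (by
    intro h
    apply hbne
    rw [← h, hBb]
    exact Set.mem_range_self t)
  have hBd : ∀ O : Set G, IsOpen O → O.Nonempty → ∃ t, Bb t ⊆ O := by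
    rintro O hO ⟨x, hx⟩
    obtain ⟨v, hvb, -, hvO⟩ := hbb.exists_subset_of_mem_open hx hO
    rw [hBb] at hvb
    obtain ⟨t, rfl⟩ := hvb
    exact ⟨t, hvO⟩
  by_cases ha : ∀ V : Set G, IsOpen V → (1 : G) ∈ V →
      ∃ S : Finset G, (Set.univ : Set G) ⊆ ⋃ x ∈ S, x • V
  · exact keyA (D := ⟨F, Bb⟩) hnd ⟨ha, hBo, hBne, hBd, hFc, hFn⟩
  · push_neg at ha
    obtain ⟨V₀, hV₀o, hV₀1, hb0⟩ := ha
    obtain ⟨V₁, hV₁o, hV₁1, hV₁⟩ := exists_open_nhds_one_mul_subset (hV₀o.mem_nhds hV₀1)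
    set W : Set G := V₁ ∩ V₁⁻¹ with hW
    have hWo : IsOpen W := hV₁o.inter hV₁o.inv
    have hW1 : (1 : G) ∈ W := ⟨hV₁1, by simpa using hV₁1⟩
    have hWV : ∀ w₁ ∈ W, ∀ w₂ ∈ W, w₁ * w₂⁻¹ ∈ V₀ := fun w₁ h₁ w₂ h₂ =>
      hV₁ (Set.mul_mem_mul h₁.1 (Set.mem_inv.mp h₂.2))
    obtain ⟨tset, htm, htc, hts⟩ := exists_mem_nhds_isClosed_subset (hWo.mem_nhds hW1)
    set W₂ : Set G := interior tset with hW₂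
    have hW₂o : IsOpen W₂ := isOpen_interior
    have hW₂1 : (1 : G) ∈ W₂ := mem_interior_iff_mem_nhds.mpr htm
    have hW₂W : closure W₂ ⊆ W := by
      intro y hy
      exact hts (htc.closure_subset ((closure_mono interior_subset) hy))
    obtain ⟨d, hd⟩ := TopologicalSpace.exists_dense_seq G
    exact keyB (D := ⟨V₀, W, W₂, d, F, Bb⟩)
      ⟨hV₀o, hb0, hWo, hW1, hWV, hW₂o, hW₂1, hW₂W, hd, hBo, hBne, hBd, hFc, hFn⟩

end CovAuxProof

set_option maxHeartbeats 1000000 in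
open CovAuxProof in
/-- for every non-discrete Polish group `G`, `cov_G = cov*_G`. -/
theorem covGroup_eq_covGroupStar
    {G : Type*} [Group G] [TopologicalSpace G] [IsTopologicalGroup G] [PolishSpace G]
    (hnd : ¬ DiscreteTopology G) :
    covGroup G = covGroupStar G := by
  letI := TopologicalSpace.upgradeIsCompletelyMetrizable G
  -- the singleton {1} is closed and nowhere dense
  have hsing_closed : IsClosed ({(1 : G)} : Set G) := isClosed_singleton
  have hsing_nwd : IsNowhereDense ({(1 : G)} : Set G) := by
    rw [hsing_closed.isNowhereDense_iff]
    by_contra h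
    obtain ⟨x, hx⟩ := Set.nonempty_iff_ne_empty.mpr h
    have hx1 : x ∈ ({(1 : G)} : Set G) := interior_subset hx
    rw [Set.mem_singleton_iff] at hx1
    rw [hx1] at hx
    have hsub : ({(1 : G)} : Set G) ⊆ interior {(1 : G)} := by
      intro y hy
      rw [Set.mem_singleton_iff] at hy
      rw [hy]
      exact hx
    have heq : interior ({(1 : G)} : Set G) = {(1 : G)} :=
      Set.Subset.antisymm interior_subset hsub
    exact hnd (discreteTopology_iff_isOpen_singleton_one.mpr (heq ▸ isOpen_interior))
  have hmul_univ : (Set.univ : Set G) * {1} = Set.univ := by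
    refine Set.Subset.antisymm (Set.subset_univ _) ?_
    intro x _
    exact ⟨x, Set.mem_univ x, 1, rfl, mul_one x⟩
  have hcovne : {κ | ∃ Q C : Set G, κ = #Q ∧ IsClosed C ∧ IsNowhereDense C ∧
      Q * C = Set.univ}.Nonempty :=
    ⟨#(Set.univ : Set G), Set.univ, {1}, rfl, hsing_closed, hsing_nwd, hmul_univ⟩
  have hsub : {κ | ∃ Q C : Set G, κ = #Q ∧ IsClosed C ∧ IsNowhereDense C ∧ Q * C = Set.univ}
      ⊆ {κ | ∃ Q M : Set G, κ = #Q ∧ IsMeagre M ∧ Q * M = Set.univ} := by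
    rintro κ ⟨Q, C, hκ, _, hn, he⟩
    exact ⟨Q, C, hκ, nwdIsMeagre hn, he⟩
  have hle1 : covGroupStar G ≤ covGroup G :=
    csInf_le_csInf (OrderBot.bddBelow _) hcovne hsub
  -- the other inequality
  have hstarne : {κ | ∃ Q M : Set G, κ = #Q ∧ IsMeagre M ∧ Q * M = Set.univ}.Nonempty :=
    ⟨_, hsub hcovne.some_mem⟩
  obtain ⟨Q, M, hκ, hM, hQM⟩ := csInf_mem hstarne
  -- decompose the meagre set M into closed nowhere dense pieces
  obtain ⟨Scol, hSnwd, hScnt, hSsub⟩ := isMeagre_iff_countable_union_isNowhereDense.mp hM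
  obtain ⟨f, hf⟩ := (hScnt.insert ∅).exists_eq_range (Set.insert_nonempty _ _)
  set F : ℕ → Set G := fun n => closure (f n) with hF
  have hFc : ∀ n, IsClosed (F n) := fun n => isClosed_closure
  have hFn : ∀ n, IsNowhereDense (F n) := by
    intro n
    have hmem : f n ∈ insert ∅ Scol := hf ▸ Set.mem_range_self n
    rcases Set.mem_insert_iff.mp hmem with h | h
    · rw [hF]
      simp only [h, closure_empty]
      exact isNowhereDense_empty
    · exact (hSnwd _ h).closure
  have hMF : M ⊆ ⋃ n, F n := by
    intro x hx
    obtain ⟨s, hs, hxs⟩ := hSsub hx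
    have hmem : s ∈ insert ∅ Scol := Set.mem_insert_of_mem _ hs
    rw [hf] at hmem
    obtain ⟨n, rfl⟩ := hmem
    exact Set.mem_iUnion.mpr ⟨n, subset_closure hxs⟩
  -- Q must be infinite
  have hQinf : ℵ₀ ≤ #Q := by
    by_contra hlt
    push_neg at hlt
    have hQfin : Q.Finite := by
      rw [Cardinal.lt_aleph0_iff_finite] at hlt
      exact Set.finite_coe_iff.mp hlt
    haveI : Countable ↥Q := hQfin.countable.to_subtype
    have hmeagre : IsMeagre (Set.univ : Set G) := by
      have hsub2 : (Set.univ : Set G) ⊆ ⋃ p : ↥Q × ℕ, (p.1 : G) • F p.2 := by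
        intro x _
        have hx : x ∈ Q * M := by rw [hQM]; trivial
        rw [Set.mem_mul] at hx
        obtain ⟨q, hq, m, hm, rfl⟩ := hx
        obtain ⟨n, hn⟩ := Set.mem_iUnion.mp (hMF hm)
        exact Set.mem_iUnion.mpr ⟨(⟨q, hq⟩, n), ⟨m, hn, rfl⟩⟩
      have h1 : ∀ p : ↥Q × ℕ, IsMeagre ((p.1 : G) • F p.2) :=
        fun p => nwdIsMeagre (nwdSmul (hFn p.2) (p.1 : G))
      exact (isMeagreIUnion h1).mono hsub2
    have hdense : Dense (∅ : Set G) := by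
      rw [IsMeagre, Set.compl_univ] at hmeagre
      exact dense_of_mem_residual hmeagre
    exact Set.not_nonempty_empty hdense.nonempty
  -- apply the key lemma
  obtain ⟨C, hCc, hCn, E, hEcnt, hEsub⟩ := keyLemma hnd F hFc hFn
  set Eu : Set G := insert 1 (⋃ n, E n) with hEu
  have hEuc : Eu.Countable := (Set.countable_iUnion hEcnt).insert 1
  have hEune : Eu.Nonempty := Set.insert_nonempty _ _
  haveI : Countable ↥Eu := hEuc.to_subtype
  haveI : Nonempty ↥Eu := hEune.to_subtype
  have hcover : Q * Eu * C = Set.univ := by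
    refine Set.Subset.antisymm (Set.subset_univ _) ?_
    intro x _
    have hx : x ∈ Q * M := by rw [hQM]; trivial
    rw [Set.mem_mul] at hx
    obtain ⟨q, hq, m, hm, rfl⟩ := hx
    obtain ⟨n, hn⟩ := Set.mem_iUnion.mp (hMF hm)
    have hmE : m ∈ E n * C := hEsub n hn
    rw [Set.mem_mul] at hmE
    obtain ⟨e, he, c, hc, rfl⟩ := hmE
    rw [← mul_assoc]
    exact Set.mul_mem_mul
      (Set.mul_mem_mul hq (Set.mem_insert_of_mem _ (Set.mem_iUnion.mpr ⟨n, he⟩))) hc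
  have hcard : #(Q * Eu : Set G) ≤ #Q := by
    have hsub3 : (Q * Eu : Set G) ⊆ ⋃ e : ↥Eu, (fun q => q * (e : G)) '' Q := by
      rintro x hx
      rw [Set.mem_mul] at hx
      obtain ⟨q, hq, e, he, rfl⟩ := hx
      exact Set.mem_iUnion.mpr ⟨⟨e, he⟩, ⟨q, hq, rfl⟩⟩
    calc #(Q * Eu : Set G) ≤ #(⋃ e : ↥Eu, (fun q => q * (e : G)) '' Q) :=
          Cardinal.mk_le_mk_of_subset hsub3
      _ ≤ #↥Eu * ⨆ e : ↥Eu, #((fun q => q * (e : G)) '' Q) := Cardinal.mk_iUnion_le _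
      _ ≤ ℵ₀ * #Q :=
          mul_le_mul' Cardinal.mk_le_aleph0 (ciSup_le' fun e => Cardinal.mk_image_le)
      _ = #Q := Cardinal.aleph0_mul_eq hQinf
  have hle2 : covGroup G ≤ covGroupStar G := by
    have hmem : #(Q * Eu : Set G) ∈ {κ | ∃ Q C : Set G, κ = #Q ∧ IsClosed C ∧
        IsNowhereDense C ∧ Q * C = Set.univ} :=
      ⟨Q * Eu, C, rfl, hCc, hCn, hcover⟩
    calc covGroup G ≤ #(Q * Eu : Set G) := csInf_le' hmem
      _ ≤ #Q := hcard
      _ = covGroupStar G := hκ.symm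
  exact le_antisymm hle2 hle1
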